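/- Let H_1, …, H_K ∈ ℂ^{p×n} be arbitrary matrices, let V ∈ ℂ^{n×m} (m ≤ n) satisfy VᴴV = I_m, let c ≥ 0 be real, and define H_e = (1/K)·Σ_{k=1}^{K} H_kᴴH_k with eigenvalues λ_1(H_e) ≥ ⋯ ≥ λ_n(H_e). Then (1/K)·Σ_{k=1}^{K} log₂ det(I_m + c·VᴴH_kᴴH_kV) ≤ Σ_{i=1}^{m} log₂(1 + c·λ_i(H_e)). -/

import Mathlib

open Matrix ComplexOrder

section Stmt7Aux

open Finset

variable {m n : ℕ}

def TT (v w : Fin n → Fin m → ℂ) (r : Fin m → Fin n) : ℂ :=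
  (∏ i, v (r i) i) * (Matrix.of fun i k : Fin m => w (r i) k).det

lemma rows_expand (v w : Fin n → Fin m → ℂ) (A : Finset (Fin n)) (g : Fin n → ℂ) :
    (Matrix.of fun i k : Fin m => ∑ j ∈ A, g j * (v j i * w j k)).det
      = ∑ r ∈ Fintype.piFinset (fun _ : Fin m => A),
          (∏ i, g (r i)) * TT v w r := by
  classical
  have h1 : (Matrix.of fun i k : Fin m => ∑ j ∈ A, g j * (v j i * w j k)).det
      = (Matrix.detRowAlternating (R := ℂ) (n := Fin m)).toMultilinearMap
          (fun i : Fin m => ∑ j ∈ A, (g j * v j i) • w j) := by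
    congr 1
    ext i k
    simp [Matrix.of_apply, Finset.sum_apply, mul_assoc]
  rw [h1, MultilinearMap.map_sum_finset]
  refine Finset.sum_congr rfl fun r _ => ?_
  rw [MultilinearMap.map_smul_univ]
  unfold TT
  simp only [smul_eq_mul, Finset.prod_mul_distrib]
  ring_nf
  rfl


lemma TT_eq_zero {v w : Fin n → Fin m → ℂ} {r : Fin m → Fin n} (hr : ¬ Function.Injective r) :
    TT v w r = 0 := by
  simp only [Function.Injective, not_forall] at hr
  obtain ⟨i, j, hij, hne⟩ := hr
  unfold TT
  rw [Matrix.det_zero_of_row_eq hne (by ext k; simp [hij]), mul_zero]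

lemma det_expand (v w : Fin n → Fin m → ℂ) (e : Fin n → ℂ) :
    (Matrix.of fun i k : Fin m => ∑ j : Fin n, e j * (v j i * w j k)).det
      = ∑ S ∈ Finset.powersetCard m (Finset.univ : Finset (Fin n)), (∏ j ∈ S, e j) *
          (Matrix.of fun i k : Fin m => ∑ j ∈ S, v j i * w j k).det := by
  classical
  have hL : (Matrix.of fun i k : Fin m => ∑ j : Fin n, e j * (v j i * w j k)).det
      = ∑ r : Fin m → Fin n, (∏ i, e (r i)) * TT v w r := by
    simpa [Fintype.piFinset_univ] using rows_expand v w Finset.univ e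
  have hR : ∀ S : Finset (Fin n),
      (Matrix.of fun i k : Fin m => ∑ j ∈ S, v j i * w j k).det
        = ∑ r ∈ Fintype.piFinset (fun _ : Fin m => S), TT v w r := by
    intro S
    simpa using rows_expand v w S (fun _ => 1)
  rw [hL]
  have hfil : ∑ r ∈ Finset.univ.filter (fun r : Fin m → Fin n => Function.Injective r),
      (∏ i, e (r i)) * TT v w r = ∑ r : Fin m → Fin n, (∏ i, e (r i)) * TT v w r := by
    refine Finset.sum_filter_of_ne fun r _ hne => ?_
    by_contra h
    rw [TT_eq_zero h, mul_zero] at hne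
    exact hne rfl
  rw [← hfil]
  rw [← Finset.sum_fiberwise_of_maps_to
    (g := fun r : Fin m → Fin n => Finset.image r Finset.univ)
    (t := Finset.powersetCard m (Finset.univ : Finset (Fin n)))
    (fun r hr => by
      simp only [Finset.mem_filter] at hr
      exact Finset.mem_powersetCard.mpr ⟨Finset.subset_univ _,
        by rw [Finset.card_image_of_injective _ hr.2, Finset.card_univ, Fintype.card_fin]⟩)]
  refine Finset.sum_congr rfl fun S hS => ?_
  have hScard : S.card = m := (Finset.mem_powersetCard.mp hS).2
  have hsets : (Finset.univ.filter (fun r : Fin m → Fin n => Function.Injective r)).filter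
        (fun r => Finset.image r Finset.univ = S)
      = (Fintype.piFinset (fun _ : Fin m => S)).filter (fun r => Function.Injective r) := by
    ext r
    simp only [Finset.mem_filter, Finset.mem_univ, true_and, Fintype.mem_piFinset]
    constructor
    · rintro ⟨hinj, him⟩
      exact ⟨fun i => him ▸ Finset.mem_image_of_mem r (Finset.mem_univ i), hinj⟩
    · rintro ⟨hmem, hinj⟩
      refine ⟨hinj, Finset.eq_of_subset_of_card_le ?_ ?_⟩
      · intro x hx
        obtain ⟨i, _, rfl⟩ := Finset.mem_image.mp hx
        exact hmem i
      · rw [Finset.card_image_of_injective _ hinj, Finset.card_univ, Fintype.card_fin, hScard]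
  rw [hsets, hR S]
  rw [Finset.mul_sum]
  conv_rhs => rw [← Finset.sum_filter_of_ne (p := fun r : Fin m → Fin n => Function.Injective r)
    (fun r _ hne => by
      by_contra h
      rw [TT_eq_zero h, mul_zero] at hne
      exact hne rfl)]
  refine Finset.sum_congr rfl fun r hr => ?_
  simp only [Finset.mem_filter, Fintype.mem_piFinset] at hr
  have him : Finset.image r Finset.univ = S := by
    refine Finset.eq_of_subset_of_card_le ?_ ?_
    · intro x hx
      obtain ⟨i, _, rfl⟩ := Finset.mem_image.mp hx
      exact hr.1 i
    · rw [Finset.card_image_of_injective _ hr.2, Finset.card_univ, Fintype.card_fin, hScard]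
  have : ∏ j ∈ S, e j = ∏ i, e (r i) := by
    rw [← him, Finset.prod_image (fun x _ y _ h => hr.2 h)]
  rw [this]

lemma fin_le {g : Fin m → Fin n} (hg : StrictMono g) (i : Fin m) : (i : ℕ) ≤ (g i : ℕ) := by
  have : ∀ k : ℕ, ∀ h : k < m, k ≤ (g ⟨k, h⟩ : ℕ) := by
    intro k
    induction k with
    | zero => intro h; simp
    | succ k ih =>
      intro h
      have hk' : k < m := Nat.lt_of_succ_lt h
      have h1 := ih hk'
      have h2 : g ⟨k, hk'⟩ < g ⟨k + 1, h⟩ := hg (by simp [Fin.lt_def])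
      rw [Fin.lt_def] at h2
      omega
  simpa using this i.1 i.2

lemma psd_det_re {ι : Type*} [Fintype ι] [DecidableEq ι] {X : Matrix ι ι ℂ}
    (hX : X.PosSemidef) : X.det = (X.det.re : ℂ) ∧ 0 ≤ X.det.re := by
  have h := hX.1.det_eq_prod_eigenvalues
  have h2 : X.det = ((∏ i, hX.1.eigenvalues i : ℝ) : ℂ) := by
    rw [h]; push_cast; rfl
  have h3 : X.det.re = ∏ i, hX.1.eigenvalues i := by rw [h2]; exact Complex.ofReal_re _
  constructor
  · conv_lhs => rw [h2]
    rw [h3]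
  · rw [h3]
    exact Finset.prod_nonneg fun i _ => hX.eigenvalues_nonneg i

lemma subset_prod_le (hmn : m ≤ n) (e : Fin n → ℝ) (he0 : ∀ j, 0 ≤ e j) (hea : Antitone e)
    (S : Finset (Fin n)) (hS : S.card = m) :
    ∏ j ∈ S, e j ≤ ∏ i : Fin m, e (Fin.castLE hmn i) := by
  classical
  let σ := S.orderIsoOfFin hS
  have h1 : ∏ j ∈ S, e j = ∏ i : Fin m, e (σ i) := by
    rw [← Finset.prod_coe_sort]
    exact (Equiv.prod_comp σ.toEquiv (fun j => e j.1)).symm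
  rw [h1]
  refine Finset.prod_le_prod (fun i _ => he0 _) (fun i _ => ?_)
  refine hea ?_
  have hsm : StrictMono (fun i : Fin m => (σ i : Fin n)) :=
    fun a b hab => by exact_mod_cast σ.strictMono hab
  have := fin_le hsm i
  rw [Fin.le_def]
  simpa using this

lemma step2 (hmn : m ≤ n) (W : Matrix (Fin n) (Fin m) ℂ) (hW : Wᴴ * W = 1)
    (e : Fin n → ℝ) (he0 : ∀ j, 0 ≤ e j) (hea : Antitone e) :
    (Wᴴ * Matrix.diagonal (fun j => (e j : ℂ)) * W).det.re
      ≤ ∏ i : Fin m, e (Fin.castLE hmn i) := by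
  classical
  set v : Fin n → Fin m → ℂ := fun j i => star (W j i) with hv
  set w' : Fin n → Fin m → ℂ := fun j k => W j k with hw'
  have hmat : ∀ g : Fin n → ℂ, Wᴴ * Matrix.diagonal g * W
      = Matrix.of fun i k : Fin m => ∑ j : Fin n, g j * (v j i * w' j k) := by
    intro g
    rw [Matrix.mul_assoc]
    ext i k
    simp only [Matrix.mul_apply, Matrix.diagonal_mul, Matrix.conjTranspose_apply,
      Matrix.of_apply, hv, hw']
    refine Finset.sum_congr rfl fun j _ => ?_
    have hd : ∑ x : Fin n, Matrix.diagonal g j x * W x k = g j * W j k := by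
      rw [Finset.sum_eq_single j]
      · rw [Matrix.diagonal_apply_eq]
      · intro x _ hx
        rw [Matrix.diagonal_apply_ne _ (Ne.symm hx), zero_mul]
      · intro h
        exact absurd (Finset.mem_univ j) h
    rw [hd]
    ring
  have hg : ∀ S : Finset (Fin n), ∃ r : ℝ, 0 ≤ r ∧
      (Matrix.of fun i k : Fin m => ∑ j ∈ S, v j i * w' j k).det = (r : ℂ) := by
    intro S
    set A : Matrix {x // x ∈ S} (Fin m) ℂ := Matrix.of fun j k => W j.1 k with hA
    have hAA : (Matrix.of fun i k : Fin m => ∑ j ∈ S, v j i * w' j k) = Aᴴ * A := by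
      ext i k
      simp only [Matrix.mul_apply, Matrix.conjTranspose_apply, Matrix.of_apply, hA, hv, hw']
      exact (Finset.sum_coe_sort S (fun j => star (W j i) * W j k)).symm
    obtain ⟨h1, h2⟩ := psd_det_re (Matrix.posSemidef_conjTranspose_mul_self A)
    exact ⟨_, h2, by rw [hAA]; exact h1⟩
  choose r hr0 hrdet using hg
  have hsum1 : ∑ S ∈ Finset.powersetCard m (Finset.univ : Finset (Fin n)), r S = 1 := by
    have h := det_expand v w' (fun _ => (1 : ℂ))
    rw [← hmat (fun _ => 1)] at h
    have h2 : Wᴴ * Matrix.diagonal (fun _ : Fin n => (1:ℂ)) * W = 1 := by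
      rw [show Matrix.diagonal (fun _ : Fin n => (1:ℂ)) = 1 from Matrix.diagonal_one,
        Matrix.mul_one, hW]
    rw [h2, Matrix.det_one] at h
    have h3 : (1 : ℂ) = ((∑ S ∈ Finset.powersetCard m (Finset.univ : Finset (Fin n)), r S : ℝ) : ℂ) := by
      rw [h]
      push_cast
      refine Finset.sum_congr rfl fun S _ => ?_
      rw [hrdet S]
      simp
    exact_mod_cast h3.symm
  have hmain : (Wᴴ * Matrix.diagonal (fun j => (e j : ℂ)) * W).det.re
      = ∑ S ∈ Finset.powersetCard m (Finset.univ : Finset (Fin n)), (∏ j ∈ S, e j) * r S := by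
    have h := det_expand v w' (fun j => (e j : ℂ))
    rw [← hmat (fun j => (e j : ℂ))] at h
    rw [h]
    rw [Finset.sum_congr rfl (fun S _ => by
      rw [hrdet S, ← Complex.ofReal_prod, ← Complex.ofReal_mul] :
      ∀ S ∈ Finset.powersetCard m (Finset.univ : Finset (Fin n)), _ = (((∏ j ∈ S, e j) * r S : ℝ) : ℂ))]
    rw [← Complex.ofReal_sum]
    exact Complex.ofReal_re _
  rw [hmain]
  calc ∑ S ∈ Finset.powersetCard m (Finset.univ : Finset (Fin n)), (∏ j ∈ S, e j) * r S
      ≤ ∑ S ∈ Finset.powersetCard m (Finset.univ : Finset (Fin n)),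
          (∏ i : Fin m, e (Fin.castLE hmn i)) * r S := by
        refine Finset.sum_le_sum fun S hS => ?_
        exact mul_le_mul_of_nonneg_right
          (subset_prod_le hmn e he0 hea S (Finset.mem_powersetCard.mp hS).2) (hr0 S)
    _ = ∏ i : Fin m, e (Fin.castLE hmn i) := by
        rw [← Finset.mul_sum, hsum1, mul_one]

lemma rsmul {ι κ : Type*} (r : ℝ) (X : Matrix ι κ ℂ) : r • X = (r : ℂ) • X := by
  ext i j
  simp [Matrix.smul_apply, Complex.real_smul]

lemma pd_det_re {ι : Type*} [Fintype ι] [DecidableEq ι] {X : Matrix ι ι ℂ}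
    (hX : X.PosDef) : X.det = (X.det.re : ℂ) ∧ 0 < X.det.re := by
  have h := hX.det_pos
  rw [Complex.lt_def] at h
  exact ⟨Complex.ext rfl (by simp [← h.2]), by simpa using h.1⟩

open scoped MatrixOrder in
lemma det_combo {M N : Matrix (Fin m) (Fin m) ℂ} (hM : M.PosDef) (hN : N.PosDef)
    {t s : ℝ} (ht : 0 ≤ t) (hs : 0 ≤ s) (hts : t + s = 1) :
    t * Real.log M.det.re + s * Real.log N.det.re ≤ Real.log ((t • M + s • N).det.re) := by
  classical
  obtain ⟨hMdet, ha⟩ := pd_det_re hM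
  obtain ⟨hNdet, hb⟩ := pd_det_re hN
  set a := M.det.re
  set b := N.det.re
  set R := CFC.sqrt M with hRdef
  have hRR : R * R = M := CFC.sqrt_mul_sqrt_self M hM.posSemidef.nonneg
  have hRH : R.IsHermitian := (CFC.sqrt_nonneg M).posSemidef.1
  have hRdet0 : R.det ≠ 0 := by
    intro h
    have : M.det = 0 := by rw [← hRR, Matrix.det_mul, h, mul_zero]
    rw [hMdet] at this
    exact_mod_cast ha.ne' (by exact_mod_cast this)
  have hRdet : IsUnit R.det := isUnit_iff_ne_zero.mpr hRdet0
  set C := R⁻¹ * N * R⁻¹ with hCdef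
  have hC : C.PosSemidef := by
    have hinv : (R⁻¹)ᴴ = R⁻¹ := hRH.inv
    have := hN.posSemidef.conjTranspose_mul_mul_same (B := R⁻¹)
    rwa [hinv] at this
  have hRC : R * C * R = N := by
    calc R * (R⁻¹ * N * R⁻¹) * R
        = (R * R⁻¹) * N * (R⁻¹ * R) := by simp only [Matrix.mul_assoc]
      _ = N := by rw [Matrix.mul_nonsing_inv _ hRdet, Matrix.nonsing_inv_mul _ hRdet,
            Matrix.one_mul, Matrix.mul_one]
  have hcomb : t • M + s • N = R * ((t : ℂ) • 1 + (s : ℂ) • C) * R := by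
    rw [Matrix.mul_add, Matrix.add_mul]
    rw [Matrix.mul_smul, Matrix.mul_smul, Matrix.smul_mul, Matrix.smul_mul]
    rw [Matrix.mul_one, hRR, hRC, rsmul t M, rsmul s N]
  -- eigenvalues of C
  have hCH : C.IsHermitian := hC.1
  set γ := hCH.eigenvalues with hγdef
  have hγ0 : ∀ i, 0 ≤ γ i := hC.eigenvalues_nonneg
  set U := (hCH.eigenvectorUnitary : Matrix (Fin m) (Fin m) ℂ) with hUdef
  have hUU : star U * U = 1 := by
    have := hCH.eigenvectorUnitary.2
    rw [Matrix.mem_unitaryGroup_iff'] at this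
    exact this
  have hU1 : (star U).det * U.det = 1 := by rw [← Matrix.det_mul, hUU, Matrix.det_one]
  have hconj : star U * ((t : ℂ) • 1 + (s : ℂ) • C) * U
      = Matrix.diagonal (fun i => ((t + s * γ i : ℝ) : ℂ)) := by
    have hspec : star U * C * U = Matrix.diagonal ((RCLike.ofReal : ℝ → ℂ) ∘ γ) :=
      by have h := hCH.conjStarAlgAut_star_eigenvectorUnitary; rwa [Unitary.conjStarAlgAut_star_apply] at h
    rw [Matrix.mul_add, Matrix.add_mul, Matrix.mul_smul, Matrix.mul_smul,
      Matrix.smul_mul, Matrix.smul_mul, Matrix.mul_one, hUU, hspec]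
    ext i j
    by_cases hij : i = j
    · subst hij
      simp [Matrix.diagonal_apply_eq, Matrix.one_apply_eq]
    · simp [Matrix.diagonal_apply_ne _ hij, Matrix.one_apply_ne hij]
  have hdet2 : ((t : ℂ) • 1 + (s : ℂ) • C).det = ((∏ i, (t + s * γ i) : ℝ) : ℂ) := by
    have h1 : (star U * ((t : ℂ) • 1 + (s : ℂ) • C) * U).det
        = ((t : ℂ) • 1 + (s : ℂ) • C).det := by
      rw [Matrix.det_mul, Matrix.det_mul]
      calc (star U).det * ((t : ℂ) • 1 + (s : ℂ) • C).det * U.det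
          = ((star U).det * U.det) * ((t : ℂ) • 1 + (s : ℂ) • C).det := by ring
        _ = _ := by rw [hU1, one_mul]
    rw [← h1, hconj, Matrix.det_diagonal, Complex.ofReal_prod]
  have hdetC : C.det = ((∏ i, γ i : ℝ) : ℂ) := by
    rw [hCH.det_eq_prod_eigenvalues]
    push_cast
    rfl
  -- b = a * ∏ γ
  have hMCR : M * C * R = R * N := by
    calc M * C * R = (R * R) * C * R := by rw [hRR]
      _ = R * (R * C * R) := by simp only [Matrix.mul_assoc]
      _ = R * N := by rw [hRC]
  have hdetN : M.det * C.det = N.det := by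
    have := congrArg Matrix.det hMCR
    simp only [Matrix.det_mul] at this
    apply mul_right_cancel₀ hRdet0
    rw [this]
    ring
  have hbprod : b = a * ∏ i, γ i := by
    have : ((a * ∏ i, γ i : ℝ) : ℂ) = (b : ℂ) := by
      rw [← hNdet, ← hdetN, hMdet, hdetC]
      push_cast
      ring
    exact_mod_cast this.symm
  have hprodpos : 0 < ∏ i, γ i := by
    rcases (Finset.prod_nonneg (fun i (_ : i ∈ Finset.univ) => hγ0 i)).lt_or_eq with h | h
    · exact h
    · exfalso
      rw [hbprod, ← h, mul_zero] at hb
      exact lt_irrefl _ hb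
  have hγpos : ∀ i, 0 < γ i := by
    intro i
    rcases (hγ0 i).lt_or_eq with h | h
    · exact h
    · exfalso
      exact hprodpos.ne' (Finset.prod_eq_zero (Finset.mem_univ i) h.symm)
  -- per-factor positivity
  have hfpos : ∀ i, 0 < t + s * γ i := by
    intro i
    rcases ht.lt_or_eq with h | h
    · exact add_pos_of_pos_of_nonneg h (mul_nonneg hs (hγ0 i))
    · have hs1 : s = 1 := by linarith
      rw [← h, hs1]
      simpa using hγpos i
  -- the determinant of the combination
  have hre : (t • M + s • N).det.re = a * ∏ i, (t + s * γ i) := by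
    have hRdetM : R.det * R.det = M.det := by rw [← Matrix.det_mul, hRR]
    have : (t • M + s • N).det = ((a * ∏ i, (t + s * γ i) : ℝ) : ℂ) := by
      rw [hcomb]
      simp only [Matrix.det_mul]
      rw [hdet2]
      rw [show R.det * ((∏ i, (t + s * γ i) : ℝ) : ℂ) * R.det
          = (R.det * R.det) * ((∏ i, (t + s * γ i) : ℝ) : ℂ) from by ring, hRdetM, hMdet]
      push_cast
      ring
    rw [this, Complex.ofReal_re]
  rw [hre]
  -- now pure real analysis
  have hlogb : Real.log b = Real.log a + Real.log (∏ i, γ i) := by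
    rw [hbprod, Real.log_mul ha.ne' hprodpos.ne']
  have hlogprod : Real.log (∏ i, γ i) = ∑ i, Real.log (γ i) :=
    Real.log_prod (fun i _ => (hγpos i).ne')
  have hrhs : Real.log (a * ∏ i, (t + s * γ i))
      = Real.log a + ∑ i, Real.log (t + s * γ i) := by
    rw [Real.log_mul ha.ne' (Finset.prod_pos (fun i _ => hfpos i)).ne',
      Real.log_prod (fun i _ => (hfpos i).ne')]
  rw [hrhs, hlogb, hlogprod]
  have hkey : ∀ i, s * Real.log (γ i) ≤ Real.log (t + s * γ i) := by
    intro i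
    have hAM : (γ i) ^ s ≤ t + s * γ i := by
      have := Real.geom_mean_le_arith_mean2_weighted ht hs zero_le_one (hγ0 i) hts
      simpa [Real.one_rpow] using this
    calc s * Real.log (γ i) = Real.log ((γ i) ^ s) := (Real.log_rpow (hγpos i) s).symm
      _ ≤ Real.log (t + s * γ i) := Real.log_le_log (Real.rpow_pos_of_pos (hγpos i) s) hAM
  have hsum : s * ∑ i, Real.log (γ i) ≤ ∑ i, Real.log (t + s * γ i) := by
    rw [Finset.mul_sum]
    exact Finset.sum_le_sum fun i _ => hkey i
  calc t * Real.log a + s * (Real.log a + ∑ i, Real.log (γ i))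
      = (t + s) * Real.log a + s * ∑ i, Real.log (γ i) := by ring
    _ = Real.log a + s * ∑ i, Real.log (γ i) := by rw [hts, one_mul]
    _ ≤ Real.log a + ∑ i, Real.log (t + s * γ i) := by linarith [hsum]

lemma psd_csmul {ι : Type*} [Fintype ι] {X : Matrix ι ι ℂ} (hX : X.PosSemidef)
    {r : ℝ} (hr : 0 ≤ r) : ((r : ℂ) • X).PosSemidef := by
  constructor
  · show ((r : ℂ) • X)ᴴ = (r : ℂ) • X
    rw [Matrix.conjTranspose_smul, hX.1.eq]
    congr 1
    rw [RCLike.star_def, Complex.conj_ofReal]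
  · exact (hX.smul (show (0 : ℂ) ≤ (r : ℂ) by exact_mod_cast hr)).2

lemma psd_sum {ι κ : Type*} [Fintype ι] [Fintype κ] (f : κ → Matrix ι ι ℂ)
    (h : ∀ k, (f k).PosSemidef) : (∑ k, f k).PosSemidef :=
  Finset.sum_induction f _ (fun _ _ ha hb => ha.add hb)
    (Matrix.PosSemidef.zero) (fun k _ => h k)

lemma concave_f (c : ℝ) (hc : 0 ≤ c) :
    ConcaveOn ℝ {X : Matrix (Fin m) (Fin m) ℂ | X.PosSemidef}
      (fun X => Real.log ((1 + (c : ℂ) • X).det.re)) := by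
  constructor
  · intro X hX Y hY t s ht hs hts
    show (t • X + s • Y).PosSemidef
    rw [rsmul t X, rsmul s Y]
    exact (psd_csmul hX ht).add (psd_csmul hY hs)
  · intro X hX Y hY t s ht hs hts
    simp only [smul_eq_mul]
    have hMX : (1 + (c : ℂ) • X).PosDef :=
      Matrix.PosDef.add_posSemidef Matrix.PosDef.one (psd_csmul hX hc)
    have hMY : (1 + (c : ℂ) • Y).PosDef :=
      Matrix.PosDef.add_posSemidef Matrix.PosDef.one (psd_csmul hY hc)
    have key := det_combo hMX hMY ht hs hts
    have hid : t • (1 + (c : ℂ) • X) + s • (1 + (c : ℂ) • Y)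
        = 1 + (c : ℂ) • (t • X + s • Y) := by
      have hts' : (t : ℂ) + (s : ℂ) = 1 := by exact_mod_cast hts
      ext i j
      simp only [Matrix.add_apply, Matrix.smul_apply, Complex.real_smul, smul_eq_mul]
      linear_combination ((1 : Matrix (Fin m) (Fin m) ℂ) i j) * hts'
    rw [hid] at key
    exact key

end Stmt7Aux

/-- Let `H_1, …, H_K ∈ ℂ^{p×n}` be arbitrary, let `V ∈ ℂ^{n×m}` (`m ≤ n`)
satisfy `VᴴV = I`, let `c ≥ 0`, and let `H_e = (1/K) ∑_k H_kᴴH_k` with eigenvalues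
`λ_1(H_e) ≥ … ≥ λ_n(H_e)` (pinned down by a unitary spectral decomposition together with
antitonicity). Then
`(1/K) ∑_k log₂ det(I + c VᴴH_kᴴH_kV) ≤ ∑_{i=1}^m log₂(1 + c λ_i(H_e))`. -/
theorem stmt_7 {p n m K : ℕ} (hK : 0 < K) (hmn : m ≤ n)
    (H : Fin K → Matrix (Fin p) (Fin n) ℂ)
    (V : Matrix (Fin n) (Fin m) ℂ) (hV : Vᴴ * V = 1)
    (c : ℝ) (hc : 0 ≤ c)
    (He : Matrix (Fin n) (Fin n) ℂ)
    (hHe : He = ((1 / K : ℝ) : ℂ) • ∑ k : Fin K, (H k)ᴴ * H k)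
    (μ : Fin n → ℝ) (hμ : Antitone μ)
    (U : Matrix (Fin n) (Fin n) ℂ) (hU : Uᴴ * U = 1)
    (hdec : He = U * Matrix.diagonal (fun i => (μ i : ℂ)) * Uᴴ) :
    (1 / K : ℝ) *
        ∑ k : Fin K,
          Real.logb 2 ((1 + (c : ℂ) • (Vᴴ * ((H k)ᴴ * H k) * V)).det).re
      ≤ ∑ i : Fin m, Real.logb 2 (1 + c * μ (Fin.castLE hmn i)) := by
  classical
  have hKne : (K : ℝ) ≠ 0 := Nat.cast_ne_zero.mpr hK.ne'
  set B : Fin K → Matrix (Fin m) (Fin m) ℂ := fun k => Vᴴ * ((H k)ᴴ * H k) * V with hB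
  have hBpsd : ∀ k, (B k).PosSemidef := by
    intro k
    have h : B k = (H k * V)ᴴ * (H k * V) := by
      rw [hB, Matrix.conjTranspose_mul]
      simp only [Matrix.mul_assoc]
    rw [h]
    exact Matrix.posSemidef_conjTranspose_mul_self _
  have hHePSD : He.PosSemidef := by
    rw [hHe]
    exact psd_csmul (psd_sum _ fun k => Matrix.posSemidef_conjTranspose_mul_self _)
      (by positivity)
  have hUUH : U * Uᴴ = 1 := mul_eq_one_comm.mp hU
  have hμ0 : ∀ i, 0 ≤ μ i := by
    have hdiagμ : Uᴴ * He * U = Matrix.diagonal (fun i => (μ i : ℂ)) := by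
      rw [hdec]
      calc Uᴴ * (U * Matrix.diagonal (fun i => (μ i : ℂ)) * Uᴴ) * U
          = (Uᴴ * U) * Matrix.diagonal (fun i => (μ i : ℂ)) * (Uᴴ * U) := by
            simp only [Matrix.mul_assoc]
        _ = _ := by rw [hU, Matrix.one_mul, Matrix.mul_one]
    have hpsd := hHePSD.conjTranspose_mul_mul_same (B := U)
    rw [hdiagμ] at hpsd
    intro i
    have := Matrix.posSemidef_diagonal_iff.mp hpsd i
    exact_mod_cast this
  have he0 : ∀ j, 0 < 1 + c * μ j := fun j => by
    have := mul_nonneg hc (hμ0 j)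
    linarith
  have hea : Antitone (fun j => 1 + c * μ j) := fun a b hab => by
    simp only
    exact add_le_add_right (mul_le_mul_of_nonneg_left (hμ hab) hc) 1
  set W : Matrix (Fin n) (Fin m) ℂ := Uᴴ * V with hWdef
  have hW : Wᴴ * W = 1 := by
    rw [hWdef, Matrix.conjTranspose_mul, Matrix.conjTranspose_conjTranspose]
    calc Vᴴ * U * (Uᴴ * V) = Vᴴ * (U * Uᴴ) * V := by simp only [Matrix.mul_assoc]
      _ = 1 := by rw [hUUH, Matrix.mul_one, hV]
  have hbar : 1 + (c : ℂ) • (Vᴴ * He * V)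
      = Wᴴ * Matrix.diagonal (fun j => ((1 + c * μ j : ℝ) : ℂ)) * W := by
    have hdiag : Matrix.diagonal (fun j : Fin n => ((1 + c * μ j : ℝ) : ℂ))
        = 1 + (c : ℂ) • Matrix.diagonal (fun i => (μ i : ℂ)) := by
      ext i j
      by_cases hij : i = j
      · subst hij
        simp only [Matrix.diagonal_apply_eq, Matrix.add_apply, Matrix.one_apply_eq,
          Matrix.smul_apply, smul_eq_mul]
        push_cast
        ring
      · simp [Matrix.diagonal_apply_ne _ hij, Matrix.one_apply_ne hij]
    rw [hdiag, Matrix.mul_add, Matrix.add_mul, Matrix.mul_one, hW,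
      Matrix.mul_smul, Matrix.smul_mul]
    congr 1
    congr 1
    rw [hWdef, hdec, Matrix.conjTranspose_mul, Matrix.conjTranspose_conjTranspose]
    simp only [Matrix.mul_assoc]
  have havg : Vᴴ * He * V = ∑ k, (1 / K : ℝ) • B k := by
    rw [hHe, Matrix.mul_smul, Matrix.smul_mul, Matrix.mul_sum, Matrix.sum_mul,
      Finset.smul_sum]
    refine Finset.sum_congr rfl fun k _ => ?_
    rw [rsmul]
  have hsumw : ∑ _k : Fin K, (1 / K : ℝ) = 1 := by
    rw [Finset.sum_const, Finset.card_univ, Fintype.card_fin, nsmul_eq_mul]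
    field_simp
  have hjen := (concave_f (m := m) c hc).le_map_sum (t := Finset.univ)
    (w := fun _ : Fin K => (1 / K : ℝ)) (p := B)
    (fun _ _ => by positivity) hsumw (fun k _ => hBpsd k)
  have hjen' : ∑ k, (1 / K : ℝ) * Real.log ((1 + (c : ℂ) • B k).det.re)
      ≤ Real.log ((1 + (c : ℂ) • (Vᴴ * He * V)).det.re) := by
    rw [havg]
    simpa [smul_eq_mul] using hjen
  have hbarPD : (1 + (c : ℂ) • (Vᴴ * He * V)).PosDef :=
    Matrix.PosDef.add_posSemidef Matrix.PosDef.one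
      (psd_csmul (hHePSD.conjTranspose_mul_mul_same (B := V)) hc)
  have hdbar_pos := (pd_det_re hbarPD).2
  have hstep2 : ((1 + (c : ℂ) • (Vᴴ * He * V)).det).re
      ≤ ∏ i : Fin m, (1 + c * μ (Fin.castLE hmn i)) := by
    rw [hbar]
    exact step2 hmn W hW (fun j => 1 + c * μ j) (fun j => (he0 j).le) hea
  have hlog2 : (0 : ℝ) < Real.log 2 := Real.log_pos one_lt_two
  have hmid : Real.log ((1 + (c : ℂ) • (Vᴴ * He * V)).det.re)
      ≤ ∑ i : Fin m, Real.log (1 + c * μ (Fin.castLE hmn i)) := by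
    calc Real.log ((1 + (c : ℂ) • (Vᴴ * He * V)).det.re)
        ≤ Real.log (∏ i : Fin m, (1 + c * μ (Fin.castLE hmn i))) :=
          Real.log_le_log hdbar_pos hstep2
      _ = _ := Real.log_prod (fun i _ => (he0 _).ne')
  calc (1 / K : ℝ) * ∑ k, Real.logb 2 ((1 + (c : ℂ) • B k).det.re)
      = (∑ k, (1 / K : ℝ) * Real.log ((1 + (c : ℂ) • B k).det.re)) / Real.log 2 := by
        simp only [Real.logb]
        rw [Finset.mul_sum, Finset.sum_div]
        refine Finset.sum_congr rfl fun k _ => by ring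
    _ ≤ Real.log ((1 + (c : ℂ) • (Vᴴ * He * V)).det.re) / Real.log 2 := by
        gcongr
    _ ≤ (∑ i : Fin m, Real.log (1 + c * μ (Fin.castLE hmn i))) / Real.log 2 := by
        gcongr
    _ = ∑ i : Fin m, Real.logb 2 (1 + c * μ (Fin.castLE hmn i)) := by
        rw [Finset.sum_div]
        simp [Real.logb]
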